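/- Let n ≥ 1 be an integer, M > n a real number, β > 0, and p : {1, …, n} → ℝ≥0 with Σ_{j=1}^n p_j = 1. Define x_k = Σ_{j=1}^k p_j M^j for 1 ≤ k ≤ n and Q_j = Σ_{k=1}^j x_k. If Q_j ≥ M^j / β for every j ∈ {1, …, n}, then β ≥ n / (1 + n²/M). -/

import Mathlib

open Finset

/-- the quantitative core of the impossibility result for
non-polymatroidal constraints. -/
theorem stmt_9 (n : ℕ) (hn : 1 ≤ n) (M : ℝ) (hM : (n : ℝ) < M)
    (β : ℝ) (hβ : 0 < β)
    (p : ℕ → ℝ) (hp : ∀ j, 0 ≤ p j) (hpsum : ∑ j ∈ Icc 1 n, p j = 1)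
    (x : ℕ → ℝ) (hx : ∀ k, x k = ∑ j ∈ Icc 1 k, p j * M ^ j)
    (Q : ℕ → ℝ) (hQ : ∀ j, Q j = ∑ k ∈ Icc 1 j, x k)
    (hmaj : ∀ j ∈ Icc 1 n, M ^ j / β ≤ Q j) :
    (n : ℝ) / (1 + (n : ℝ) ^ 2 / M) ≤ β := by
  have hM1 : (1 : ℝ) ≤ M := le_trans (by exact_mod_cast hn) hM.le
  have hM0 : (0 : ℝ) < M := lt_of_lt_of_le one_pos hM1
  have hsum_le : ∀ k ≤ n, ∑ i ∈ Icc 1 k, p i ≤ 1 := by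
    intro k hk
    rw [← hpsum]
    exact Finset.sum_le_sum_of_subset_of_nonneg (Icc_subset_Icc_right hk)
      (fun i _ _ => hp i)
  have hxle : ∀ k ≤ n, x k ≤ M ^ k := by
    intro k hk
    rw [hx]
    calc ∑ i ∈ Icc 1 k, p i * M ^ i ≤ ∑ i ∈ Icc 1 k, p i * M ^ k := by
          refine Finset.sum_le_sum fun i hi => ?_
          exact mul_le_mul_of_nonneg_left
            (pow_le_pow_right₀ hM1 (mem_Icc.mp hi).2) (hp i)
      _ = (∑ i ∈ Icc 1 k, p i) * M ^ k := by rw [← Finset.sum_mul]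
      _ ≤ 1 * M ^ k := mul_le_mul_of_nonneg_right (hsum_le k hk)
            (pow_nonneg hM0.le k)
      _ = M ^ k := one_mul _
  have key : ∀ j ∈ Icc 1 n, 1 / β ≤ p j + (j : ℝ) / M := by
    intro j hj
    obtain ⟨hj1, hjn⟩ := mem_Icc.mp hj
    obtain ⟨m, rfl⟩ : ∃ m, j = m + 1 := ⟨j - 1, (Nat.succ_pred_eq_of_pos hj1).symm⟩
    have hmn : m ≤ n := le_trans (Nat.le_succ m) hjn
    have hQb : Q (m + 1) ≤ p (m + 1) * M ^ (m + 1) + (m + 1 : ℝ) * M ^ m := by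
      rw [hQ, Finset.sum_Icc_succ_top (Nat.le_add_left 1 m)]
      have h1 : ∑ k ∈ Icc 1 m, x k ≤ (m : ℝ) * M ^ m := by
        calc ∑ k ∈ Icc 1 m, x k ≤ ∑ k ∈ Icc 1 m, M ^ m := by
              refine Finset.sum_le_sum fun k hk => ?_
              obtain ⟨hk1, hkm⟩ := mem_Icc.mp hk
              exact le_trans (hxle k (le_trans hkm hmn))
                (pow_le_pow_right₀ hM1 hkm)
          _ = (m : ℝ) * M ^ m := by
              rw [Finset.sum_const, Nat.card_Icc, nsmul_eq_mul]
              norm_num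
      have h2 : x (m + 1) ≤ p (m + 1) * M ^ (m + 1) + M ^ m := by
        rw [hx, Finset.sum_Icc_succ_top (Nat.le_add_left 1 m), ← hx]
        have := hxle m hmn
        linarith
      push_cast
      linarith
    have hmaj' := hmaj (m + 1) hj
    have hMj : (0 : ℝ) < M ^ (m + 1) := pow_pos hM0 _
    rw [div_le_iff₀ hβ]
    have : M ^ (m + 1) ≤ (p (m + 1) + (↑(m + 1) : ℝ) / M) * M ^ (m + 1) * β := by
      have hq : M ^ (m + 1) / β ≤ p (m + 1) * M ^ (m + 1) + (m + 1 : ℝ) * M ^ m :=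
        le_trans hmaj' hQb
      rw [div_le_iff₀ hβ] at hq
      have hpow : ((↑(m + 1) : ℝ) / M) * M ^ (m + 1) = (m + 1 : ℝ) * M ^ m := by
        rw [pow_succ]
        field_simp
        push_cast
        ring
      calc M ^ (m + 1) ≤ (p (m + 1) * M ^ (m + 1) + (m + 1 : ℝ) * M ^ m) * β := hq
        _ = (p (m + 1) + (↑(m + 1) : ℝ) / M) * M ^ (m + 1) * β := by
            rw [pow_succ]; field_simp; push_cast; ring
    -- from this : M^(m+1) ≤ (..) * M^(m+1) * β, cancel M^(m+1)
    nlinarith [hMj, this]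
  have hcard : (Icc 1 n).card = n := by rw [Nat.card_Icc]; omega
  have hsum2 : (n : ℝ) * (1 / β) ≤ 1 + (n : ℝ) ^ 2 / M := by
    calc (n : ℝ) * (1 / β) = ∑ _j ∈ Icc 1 n, (1 / β) := by
          rw [Finset.sum_const, hcard, nsmul_eq_mul]
      _ ≤ ∑ j ∈ Icc 1 n, (p j + (j : ℝ) / M) := Finset.sum_le_sum key
      _ = 1 + ∑ j ∈ Icc 1 n, (j : ℝ) / M := by
          rw [Finset.sum_add_distrib, hpsum]
      _ ≤ 1 + (n : ℝ) ^ 2 / M := by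
          have h1 : ∑ j ∈ Icc 1 n, (j : ℝ) / M ≤ ∑ _j ∈ Icc 1 n, (n : ℝ) / M := by
            refine Finset.sum_le_sum fun j hj => ?_
            have hjn : (j : ℝ) ≤ n := by exact_mod_cast (mem_Icc.mp hj).2
            exact (div_le_div_iff_of_pos_right hM0).mpr hjn
          have h2 : ∑ _j ∈ Icc 1 n, (n : ℝ) / M = (n : ℝ) ^ 2 / M := by
            rw [Finset.sum_const, hcard, nsmul_eq_mul]
            ring
          linarith
  have hC : (0 : ℝ) < 1 + (n : ℝ) ^ 2 / M := by positivity
  rw [div_le_iff₀ hC]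
  rw [mul_one_div, div_le_iff₀ hβ] at hsum2
  nlinarith
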